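/- Let b > 0 and q ≥ 1, and let Z be a real random variable with the generalized Gaussian distribution of scale b and shape q, whose variance is σ² = b²·Γ(3/q)/Γ(1/q). Then for every real t with (1.85)²·t²·σ² < 1, the moment generating function satisfies E[exp(tZ)] ≤ ∑_{m=0}^∞ ((1.85)²·t²·σ²)^m = 1/(1 − (1.85)²·t²·σ²). -/

import Mathlib

open MeasureTheory Real Set

namespace GenGaussAux

lemma wendel_upper {y s : ℝ} (hy : 0 < y) (hs0 : 0 ≤ s) (hs1 : s ≤ 1) :
    Real.Gamma (y + s) ≤ Real.Gamma y * y ^ s := by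
  have hΓy : 0 < Real.Gamma y := Real.Gamma_pos_of_pos hy
  have hys : 0 < y + s := by linarith
  have hΓys : 0 < Real.Gamma (y + s) := Real.Gamma_pos_of_pos hys
  have hconv := Real.convexOn_log_Gamma.2 (Set.mem_Ioi.mpr hy)
      (Set.mem_Ioi.mpr (by linarith : (0:ℝ) < y + 1)) (by linarith : (0:ℝ) ≤ 1 - s) hs0
      (by ring)
  simp only [Function.comp, smul_eq_mul] at hconv
  rw [show (1 - s) * y + s * (y + 1) = y + s by ring] at hconv
  rw [Real.Gamma_add_one (ne_of_gt hy), Real.log_mul (ne_of_gt hy) (ne_of_gt hΓy)] at hconv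
  have hlog : Real.log (Real.Gamma (y + s)) ≤ Real.log (Real.Gamma y) + s * Real.log y := by
    nlinarith [hconv]
  calc Real.Gamma (y + s) = Real.exp (Real.log (Real.Gamma (y + s))) := (Real.exp_log hΓys).symm
    _ ≤ Real.exp (Real.log (Real.Gamma y) + s * Real.log y) := Real.exp_le_exp.mpr hlog
    _ = Real.Gamma y * y ^ s := by
        rw [Real.exp_add, Real.exp_log hΓy, Real.rpow_def_of_pos hy, mul_comm (Real.log y) s]

lemma wendel_lower {y s : ℝ} (hy : 0 < y) (hs0 : 0 ≤ s) (hs1 : s ≤ 1) :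
    Real.Gamma y * y ≤ Real.Gamma (y + s) * (y + s) ^ (1 - s) := by
  have hΓy : 0 < Real.Gamma y := Real.Gamma_pos_of_pos hy
  have hys : 0 < y + s := by linarith
  have hΓys : 0 < Real.Gamma (y + s) := Real.Gamma_pos_of_pos hys
  have hconv := Real.convexOn_log_Gamma.2 (Set.mem_Ioi.mpr hys)
      (Set.mem_Ioi.mpr (by linarith : (0:ℝ) < y + s + 1)) hs0 (by linarith : (0:ℝ) ≤ 1 - s)
      (by ring)
  simp only [Function.comp, smul_eq_mul] at hconv
  rw [show s * (y + s) + (1 - s) * (y + s + 1) = y + 1 by ring] at hconv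
  rw [show y + s + 1 = (y + s) + 1 by ring, Real.Gamma_add_one (ne_of_gt hys),
    Real.log_mul (ne_of_gt hys) (ne_of_gt hΓys), Real.Gamma_add_one (ne_of_gt hy),
    Real.log_mul (ne_of_gt hy) (ne_of_gt hΓy)] at hconv
  have hlog : Real.log y + Real.log (Real.Gamma y) ≤
      Real.log (Real.Gamma (y + s)) + (1 - s) * Real.log (y + s) := by nlinarith [hconv]
  calc Real.Gamma y * y
      = Real.exp (Real.log y + Real.log (Real.Gamma y)) := by
        rw [Real.exp_add, Real.exp_log hy, Real.exp_log hΓy]; ring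
    _ ≤ Real.exp (Real.log (Real.Gamma (y + s)) + (1 - s) * Real.log (y + s)) :=
        Real.exp_le_exp.mpr hlog
    _ = Real.Gamma (y + s) * (y + s) ^ (1 - s) := by
        rw [Real.exp_add, Real.exp_log hΓys, Real.rpow_def_of_pos hys,
          mul_comm (Real.log (y + s)) (1 - s)]



def oddProd (m : ℕ) : ℕ := ∏ k ∈ Finset.range m, (2 * k + 1)

lemma oddProd_succ (m : ℕ) : oddProd (m + 1) = oddProd m * (2 * m + 1) :=
  Finset.prod_range_succ _ m

lemma oddProd_pos (m : ℕ) : 0 < oddProd m :=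
  Finset.prod_pos (fun i _ => by omega)

lemma oddProd_mul (m : ℕ) : 2 ^ m * m.factorial * oddProd m = (2 * m).factorial := by
  induction m with
  | zero => rfl
  | succ n ih =>
    have h1 : 2 * (n + 1) = (2 * n + 1) + 1 := by ring
    calc 2 ^ (n + 1) * (n + 1).factorial * oddProd (n + 1)
        = (2 * (n + 1)) * ((2 * n + 1) * (2 ^ n * n.factorial * oddProd n)) := by
          rw [oddProd_succ, pow_succ, Nat.factorial_succ]; ring
      _ = (2 * (n + 1)) * ((2 * n + 1) * (2 * n).factorial) := by rw [ih]
      _ = (2 * (n + 1)).factorial := by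
          rw [h1, Nat.factorial_succ, Nat.factorial_succ]

lemma oddProd_le (m : ℕ) : oddProd m ≤ (2 * m).factorial := by
  calc oddProd m ≤ 2 ^ m * m.factorial * oddProd m :=
        Nat.le_mul_of_pos_left _ (by positivity)
    _ = (2 * m).factorial := oddProd_mul m

lemma rpow_npow_comm {a : ℝ} (ha : 0 ≤ a) (w : ℝ) (m : ℕ) :
    (a ^ w) ^ m = (a ^ m) ^ w := by
  rw [← Real.rpow_natCast (a ^ w) m, ← Real.rpow_mul ha, mul_comm, Real.rpow_mul ha,
    Real.rpow_natCast]

lemma caseA (x : ℝ) (hx0 : 0 < x) (hx2 : 2 * x ≤ 1) (m : ℕ) :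
    Real.Gamma ((2 * m + 1) * x) ≤
      Real.Gamma x * ((oddProd m : ℝ) * x ^ m) ^ (2 * x) := by
  induction m with
  | zero => simp [oddProd]
  | succ n ih =>
    have hy : 0 < (2 * (n : ℝ) + 1) * x := by positivity
    have harg : (2 * ((n : ℕ) + 1 : ℕ) + 1 : ℝ) * x = ((2 * n + 1) * x) + 2 * x := by
      push_cast; ring
    rw [harg]
    calc Real.Gamma ((2 * (n : ℝ) + 1) * x + 2 * x)
        ≤ Real.Gamma ((2 * n + 1) * x) * ((2 * n + 1) * x) ^ (2 * x) :=
          wendel_upper hy (by linarith) hx2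
      _ ≤ (Real.Gamma x * ((oddProd n : ℝ) * x ^ n) ^ (2 * x)) * ((2 * n + 1) * x) ^ (2 * x) :=
          mul_le_mul_of_nonneg_right ih (Real.rpow_nonneg (by positivity) _)
      _ = Real.Gamma x * ((oddProd (n + 1) : ℝ) * x ^ (n + 1)) ^ (2 * x) := by
          rw [mul_assoc, ← Real.mul_rpow (by positivity) (by positivity)]
          congr 2
          rw [oddProd_succ]; push_cast; ring

lemma caseB (x : ℝ) (hx0 : 0 < x) (hx1 : x ≤ 1) (hx2 : 1 ≤ 2 * x) (m : ℕ) :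
    Real.Gamma ((2 * m + 1) * x) ≤
      Real.Gamma x * (2 ^ m * (m.factorial : ℝ) * x ^ m) *
        ((oddProd m : ℝ) * x ^ m) ^ (2 * x - 1) := by
  have hs0 : (0:ℝ) ≤ 2 * x - 1 := by linarith
  have hs1 : 2 * x - 1 ≤ 1 := by linarith
  induction m with
  | zero => simp [oddProd]
  | succ n ih =>
    have hy : 0 < (2 * (n : ℝ) + 1) * x := by positivity
    have hys : 0 < (2 * (n : ℝ) + 1) * x + (2 * x - 1) := by
      have : (1:ℝ) ≤ 2 * x := hx2; nlinarith
    have harg : (2 * ((n : ℕ) + 1 : ℕ) + 1 : ℝ) * x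
        = ((2 * n + 1) * x + (2 * x - 1)) + 1 := by push_cast; ring
    rw [harg, Real.Gamma_add_one (ne_of_gt hys)]
    have hW : Real.Gamma ((2 * (n:ℝ) + 1) * x + (2 * x - 1)) ≤
        Real.Gamma ((2 * (n:ℝ) + 1) * x) * ((2 * (n:ℝ) + 1) * x) ^ (2 * x - 1) :=
      wendel_upper hy hs0 hs1
    have hfac : (2 * (n:ℝ) + 1) * x + (2 * x - 1) ≤ (2 * n + 2) * x := by nlinarith
    calc ((2 * (n:ℝ) + 1) * x + (2 * x - 1)) * Real.Gamma ((2 * (n:ℝ) + 1) * x + (2 * x - 1))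
        ≤ ((2 * (n:ℝ) + 2) * x) *
            (Real.Gamma ((2 * (n:ℝ) + 1) * x) * ((2 * (n:ℝ) + 1) * x) ^ (2 * x - 1)) := by
          apply mul_le_mul hfac hW (Real.Gamma_pos_of_pos hys).le (by positivity)
      _ ≤ ((2 * (n:ℝ) + 2) * x) *
            ((Real.Gamma x * (2 ^ n * (n.factorial : ℝ) * x ^ n) *
              ((oddProd n : ℝ) * x ^ n) ^ (2 * x - 1)) * ((2 * (n:ℝ) + 1) * x) ^ (2 * x - 1)) := by
          apply mul_le_mul_of_nonneg_left _ (by positivity)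
          exact mul_le_mul_of_nonneg_right ih (Real.rpow_nonneg (by positivity) _)
      _ = Real.Gamma x * (2 ^ (n+1) * ((n+1).factorial : ℝ) * x ^ (n+1)) *
            ((oddProd (n+1) : ℝ) * x ^ (n+1)) ^ (2 * x - 1) := by
          rw [mul_assoc (Real.Gamma x * _), ← Real.mul_rpow (by positivity) (by positivity)]
          rw [show ((oddProd n : ℝ) * x ^ n) * ((2 * (n:ℝ) + 1) * x)
              = ((oddProd (n+1) : ℝ) * x ^ (n+1)) by rw [oddProd_succ]; push_cast; ring]
          rw [Nat.factorial_succ]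
          push_cast
          ring

lemma sigma_lower_A {x : ℝ} (hx0 : 0 < x) (hx2 : 2 * x ≤ 1) :
    Real.Gamma x * ((3 * x) ^ (2 * x) / 3) ≤ Real.Gamma (3 * x) := by
  have h3x : 0 < 3 * x := by positivity
  have hW := wendel_lower hx0 (by linarith : (0:ℝ) ≤ 2 * x) hx2
  rw [show x + 2 * x = 3 * x by ring] at hW
  have hmul : Real.Gamma x * x * (3*x) ^ (2*x - 1) ≤ Real.Gamma (3*x) := by
    calc Real.Gamma x * x * (3*x) ^ (2*x - 1)
        ≤ Real.Gamma (3*x) * (3*x) ^ (1 - 2*x) * (3*x) ^ (2*x - 1) :=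
          mul_le_mul_of_nonneg_right hW (Real.rpow_nonneg h3x.le _)
      _ = Real.Gamma (3*x) := by
          rw [mul_assoc, ← Real.rpow_add h3x, show (1 - 2*x) + (2*x - 1) = 0 by ring,
            Real.rpow_zero, mul_one]
  refine le_trans (le_of_eq ?_) hmul
  rw [Real.rpow_sub h3x, Real.rpow_one]
  field_simp

lemma sigma_lower_B {x : ℝ} (hx0 : 0 < x) (hx1 : x ≤ 1) (hx2 : 1 ≤ 2 * x) :
    Real.Gamma x * x ^ (2 * x) ≤ Real.Gamma (3 * x) := by
  have hs0 : (0:ℝ) ≤ 2 * x - 1 := by linarith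
  have hs1 : 2 * x - 1 ≤ 1 := by linarith
  have hxs : 0 < x + (2 * x - 1) := by linarith
  have hW := wendel_lower hx0 hs0 hs1
  have hlow : Real.Gamma x * x * (x + (2*x-1)) ^ ((2*x-1) - 1) ≤ Real.Gamma (x + (2*x-1)) := by
    calc Real.Gamma x * x * (x + (2*x-1)) ^ ((2*x-1) - 1)
        ≤ Real.Gamma (x + (2*x-1)) * (x + (2*x-1)) ^ (1 - (2*x-1)) *
            (x + (2*x-1)) ^ ((2*x-1) - 1) :=
          mul_le_mul_of_nonneg_right hW (Real.rpow_nonneg hxs.le _)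
      _ = Real.Gamma (x + (2*x-1)) := by
          rw [mul_assoc, ← Real.rpow_add hxs, show (1 - (2*x-1)) + ((2*x-1) - 1) = 0 by ring,
            Real.rpow_zero, mul_one]
  have h3 : (3:ℝ) * x = (x + (2 * x - 1)) + 1 := by ring
  rw [h3, Real.Gamma_add_one (ne_of_gt hxs)]
  have hxpow : x ^ (2*x) = x ^ (1:ℝ) * x ^ (2*x - 1) := by
    rw [← Real.rpow_add hx0, show (1:ℝ) + (2*x-1) = 2*x by ring]
  have hxs_split : (x + (2*x-1)) ^ ((2*x-1) - 1) * (x + (2*x-1)) ^ (1:ℝ)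
      = (x + (2*x-1)) ^ (2*x - 1) := by
    rw [← Real.rpow_add hxs, show ((2*x-1) - 1) + 1 = 2*x - 1 by ring]
  have h3' : x ^ (2*x-1) ≤ (x + (2*x-1)) ^ (2*x-1) :=
    Real.rpow_le_rpow hx0.le (by linarith) hs0
  calc Real.Gamma x * x ^ (2 * x)
      = (Real.Gamma x * x) * x ^ (2*x - 1) := by
        rw [hxpow, Real.rpow_one]; ring
    _ ≤ (Real.Gamma x * x) * (x + (2*x-1)) ^ (2*x-1) := by
        apply mul_le_mul_of_nonneg_left h3'
        have := Real.Gamma_pos_of_pos hx0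
        positivity
    _ = (Real.Gamma x * x * (x + (2*x-1)) ^ ((2*x-1) - 1)) * (x + (2*x-1)) := by
        rw [← hxs_split, Real.rpow_one]; ring
    _ ≤ Real.Gamma (x + (2*x-1)) * (x + (2*x-1)) :=
        mul_le_mul_of_nonneg_right hlow hxs.le
    _ = (x + (2*x-1)) * Real.Gamma (x + (2*x-1)) := by ring

lemma key (x : ℝ) (hx0 : 0 < x) (hx1 : x ≤ 1) (m : ℕ) :
    Real.Gamma ((2 * m + 1) * x) / Real.Gamma x ≤
      (1.85:ℝ) ^ (2 * m) * ((2 * m).factorial : ℝ) *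
        (Real.Gamma (3 * x) / Real.Gamma x) ^ m := by
  have hΓx : 0 < Real.Gamma x := Real.Gamma_pos_of_pos hx0
  have h3x : 0 < 3 * x := by positivity
  have hc : (1:ℝ) ≤ 1.85 ^ (2 * m) := one_le_pow₀ (by norm_num)
  have hD : (0:ℝ) < (oddProd m : ℝ) := by exact_mod_cast oddProd_pos m
  have hDle : (oddProd m : ℝ) ≤ ((2 * m).factorial : ℝ) := by exact_mod_cast oddProd_le m
  rcases le_or_gt (2 * x) 1 with hA | hB
  · -- case 2x ≤ 1
    have h1 := caseA x hx0 hA m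
    have h2 := sigma_lower_A hx0 hA
    have hG3 : (3 * x) ^ (2 * x) / 3 ≤ Real.Gamma (3 * x) / Real.Gamma x := by
      rw [le_div_iff₀ hΓx]; linarith [h2]
    have hG3pos : (0:ℝ) < (3 * x) ^ (2 * x) / 3 := by positivity
    have hpow : ((3 * x) ^ (2 * x) / 3) ^ m ≤ (Real.Gamma (3 * x) / Real.Gamma x) ^ m :=
      pow_le_pow_left₀ hG3pos.le hG3 m
    have hLHS : Real.Gamma ((2 * m + 1) * x) / Real.Gamma x ≤
        ((oddProd m : ℝ) * x ^ m) ^ (2 * x) := by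
      rw [div_le_iff₀ hΓx]
      exact h1.trans_eq (mul_comm _ _)
    refine hLHS.trans (le_trans ?_ (by
      apply mul_le_mul_of_nonneg_left hpow (by positivity)))
    -- goal : (D * x^m)^(2x) ≤ 1.85^(2m) * (2m)! * ((3x)^(2x)/3)^m
    have hident : (((3:ℝ) * x) ^ (2 * x) / 3) ^ m
        = ((3:ℝ)^m * x ^ m) ^ (2*x) / 3 ^ m := by
      rw [div_pow, rpow_npow_comm h3x.le (2*x) m, mul_pow]
    rw [hident, ← mul_div_assoc, le_div_iff₀ (by positivity : (0:ℝ) < (3:ℝ) ^ m)]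
    -- (D x^m)^(2x) * 3^m ≤ 1.85^(2m) * (2m)! * (3^m x^m)^(2x)
    rcases le_or_gt (oddProd m : ℝ) ((3:ℝ)^m) with hcase | hcase
    · have hb1 : ((oddProd m : ℝ) * x ^ m) ^ (2*x) ≤ ((3:ℝ)^m * x ^ m) ^ (2*x) :=
        Real.rpow_le_rpow (by positivity) (by
          apply mul_le_mul_of_nonneg_right hcase (by positivity)) (by linarith)
      calc ((oddProd m : ℝ) * x ^ m) ^ (2*x) * 3 ^ m
          ≤ ((3:ℝ)^m * x ^ m) ^ (2*x) * (1.85 ^ (2*m) * ((2*m).factorial : ℝ)) := by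
            apply mul_le_mul hb1 ?_ (by positivity) (by positivity)
            calc ((3:ℝ))^m ≤ ((1.85:ℝ)^2)^m := by
                  apply pow_le_pow_left₀ (by norm_num) (by norm_num)
              _ = 1.85 ^ (2*m) := by rw [← pow_mul, mul_comm]
              _ ≤ 1.85 ^ (2*m) * ((2*m).factorial : ℝ) := by
                  nth_rewrite 1 [← mul_one ((1.85:ℝ) ^ (2*m))]
                  apply mul_le_mul_of_nonneg_left ?_ (by positivity)
                  exact_mod_cast Nat.one_le_iff_ne_zero.mpr (Nat.factorial_ne_zero _)
        _ = 1.85 ^ (2*m) * ((2*m).factorial : ℝ) * ((3:ℝ)^m * x ^ m) ^ (2*x) := by ring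
    · -- 3^m < D
      have hsplit : ((oddProd m : ℝ) * x ^ m) ^ (2*x)
          = ((3:ℝ)^m * x ^ m) ^ (2*x) * ((oddProd m : ℝ) / 3^m) ^ (2*x) := by
        rw [← Real.mul_rpow (by positivity) (by positivity)]
        congr 1
        field_simp
      have hq1 : (1:ℝ) ≤ (oddProd m : ℝ) / 3^m := by
        rw [le_div_iff₀ (by positivity)]; linarith
      have hqle : ((oddProd m : ℝ) / 3^m) ^ (2*x) ≤ (oddProd m : ℝ) / 3^m := by
        calc ((oddProd m : ℝ) / 3^m) ^ (2*x) ≤ ((oddProd m : ℝ) / 3^m) ^ (1:ℝ) :=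
              Real.rpow_le_rpow_of_exponent_le hq1 hA
          _ = (oddProd m : ℝ) / 3^m := Real.rpow_one _
      calc ((oddProd m : ℝ) * x ^ m) ^ (2*x) * 3 ^ m
          = ((3:ℝ)^m * x ^ m) ^ (2*x) * (((oddProd m : ℝ) / 3^m) ^ (2*x) * 3 ^ m) := by
            rw [hsplit]; ring
        _ ≤ ((3:ℝ)^m * x ^ m) ^ (2*x) * ((oddProd m : ℝ)) := by
            apply mul_le_mul_of_nonneg_left ?_ (by positivity)
            calc ((oddProd m : ℝ) / 3^m) ^ (2*x) * 3 ^ m ≤ ((oddProd m : ℝ) / 3^m) * 3 ^ m := by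
                  apply mul_le_mul_of_nonneg_right hqle (by positivity)
              _ = (oddProd m : ℝ) := by field_simp
        _ ≤ ((3:ℝ)^m * x ^ m) ^ (2*x) * (1.85 ^ (2*m) * ((2*m).factorial : ℝ)) := by
            apply mul_le_mul_of_nonneg_left ?_ (by positivity)
            calc (oddProd m : ℝ) ≤ ((2*m).factorial : ℝ) := hDle
              _ ≤ 1.85 ^ (2*m) * ((2*m).factorial : ℝ) := by
                  nth_rewrite 1 [← one_mul (((2*m).factorial : ℝ))]
                  exact mul_le_mul_of_nonneg_right hc (by positivity)
        _ = 1.85 ^ (2*m) * ((2*m).factorial : ℝ) * ((3:ℝ)^m * x ^ m) ^ (2*x) := by ring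
  · -- case 1 < 2x
    have h1 := caseB x hx0 hx1 (le_of_lt hB) m
    have h2 := sigma_lower_B hx0 hx1 (le_of_lt hB)
    have hG3 : x ^ (2 * x) ≤ Real.Gamma (3 * x) / Real.Gamma x := by
      rw [le_div_iff₀ hΓx]; linarith [h2]
    have hpow : (x ^ (2*x)) ^ m ≤ (Real.Gamma (3 * x) / Real.Gamma x) ^ m :=
      pow_le_pow_left₀ (by positivity) hG3 m
    have hLHS : Real.Gamma ((2 * m + 1) * x) / Real.Gamma x ≤
        (2 ^ m * (m.factorial : ℝ) * x ^ m) * ((oddProd m : ℝ) * x ^ m) ^ (2 * x - 1) := by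
      rw [div_le_iff₀ hΓx]
      refine h1.trans_eq ?_
      ring
    refine hLHS.trans (le_trans ?_ (by
      apply mul_le_mul_of_nonneg_left hpow (by positivity)))
    -- goal : 2^m m! x^m (D x^m)^(2x-1) ≤ 1.85^(2m) (2m)! (x^(2x))^m
    have hxm : (0:ℝ) < x ^ m := by positivity
    have hident : ((x:ℝ) ^ (2*x)) ^ m = x ^ m * (x ^ m) ^ (2*x - 1) := by
      rw [rpow_npow_comm hx0.le (2*x) m]
      have h := Real.rpow_add hxm 1 (2*x - 1)
      rw [show (1:ℝ) + (2*x - 1) = 2*x by ring, Real.rpow_one] at h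
      exact h
    rw [hident]
    have hsplit : ((oddProd m : ℝ) * x ^ m) ^ (2*x - 1)
        = (oddProd m : ℝ) ^ (2*x - 1) * (x ^ m) ^ (2*x - 1) :=
      Real.mul_rpow hD.le hxm.le
    rw [hsplit]
    have hDpow : (oddProd m : ℝ) ^ (2*x - 1) ≤ (oddProd m : ℝ) := by
      have hD1 : (1:ℝ) ≤ (oddProd m : ℝ) := by exact_mod_cast oddProd_pos m
      calc (oddProd m : ℝ) ^ (2*x - 1) ≤ (oddProd m : ℝ) ^ (1:ℝ) :=
            Real.rpow_le_rpow_of_exponent_le hD1 (by linarith)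
        _ = (oddProd m : ℝ) := Real.rpow_one _
    have hkey2 : (2:ℝ) ^ m * (m.factorial : ℝ) * (oddProd m : ℝ) = ((2*m).factorial : ℝ) := by
      exact_mod_cast oddProd_mul m
    calc 2 ^ m * (m.factorial : ℝ) * x ^ m * ((oddProd m : ℝ) ^ (2*x-1) * (x ^ m) ^ (2*x-1))
        ≤ 2 ^ m * (m.factorial : ℝ) * x ^ m * ((oddProd m : ℝ) * (x ^ m) ^ (2*x-1)) := by
          apply mul_le_mul_of_nonneg_left ?_ (by positivity)
          apply mul_le_mul_of_nonneg_right hDpow (Real.rpow_nonneg hxm.le _)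
      _ = ((2*m).factorial : ℝ) * (x ^ m * (x ^ m) ^ (2*x-1)) := by
          rw [← hkey2]; ring
      _ ≤ 1.85 ^ (2*m) * ((2*m).factorial : ℝ) * (x ^ m * (x ^ m) ^ (2*x-1)) := by
          apply mul_le_mul_of_nonneg_right ?_ (by positivity)
          nth_rewrite 1 [← one_mul (((2*m).factorial : ℝ))]
          exact mul_le_mul_of_nonneg_right hc (by positivity)

lemma integrand_eq {b q : ℝ} (hb : 0 < b) (hq0 : 0 < q) (m : ℕ) {z : ℝ} (hz : z ∈ Ioi (0:ℝ)) :
    z ^ ((2*m : ℕ) : ℝ) * Real.exp (-(b^(-q)) * z ^ q)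
      = Real.exp (-((|z| / b) ^ q)) * z ^ (2*m) := by
  have hz0 : (0:ℝ) < z := hz
  rw [abs_of_pos hz0, Real.div_rpow hz0.le hb.le, Real.rpow_neg hb.le,
    Real.rpow_natCast]
  rw [neg_mul, mul_comm (b ^ q)⁻¹ (z ^ q), ← div_eq_mul_inv]
  ring

lemma integrable_moment {b q : ℝ} (hb : 0 < b) (hq : 1 ≤ q) (m : ℕ) :
    Integrable (fun z : ℝ => Real.exp (-((|z| / b) ^ q)) * z ^ (2*m)) := by
  have hq0 : (0:ℝ) < q := by linarith
  have hIoi : IntegrableOn (fun z : ℝ => Real.exp (-((|z| / b) ^ q)) * z ^ (2*m)) (Ioi 0) := by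
    have h := integrableOn_rpow_mul_exp_neg_mul_rpow
      (p := q) (s := ((2*m : ℕ) : ℝ)) (b := b^(-q))
      (lt_of_lt_of_le neg_one_lt_zero (Nat.cast_nonneg _)) hq0 (Real.rpow_pos_of_pos hb _)
    exact h.congr_fun (fun z hz => integrand_eq hb hq0 m hz) measurableSet_Ioi
  rw [← integrableOn_univ, ← @Iio_union_Ici _ _ (0 : ℝ), integrableOn_union,
    integrableOn_Ici_iff_integrableOn_Ioi]
  refine ⟨?_, hIoi⟩
  rw [← (Measure.measurePreserving_neg (volume : Measure ℝ)).integrableOn_comp_preimage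
      (Homeomorph.neg ℝ).measurableEmbedding]
  simp only [Function.comp_def, neg_preimage, neg_Iio, neg_zero]
  exact hIoi.congr_fun
    (fun z _ => by simp [abs_neg, Even.neg_pow (even_two_mul m)]) measurableSet_Ioi

lemma moment_eq {b q : ℝ} (hb : 0 < b) (hq : 1 ≤ q) (m : ℕ) :
    ∫ z : ℝ, Real.exp (-((|z| / b) ^ q)) * z ^ (2*m)
      = 2 * b ^ (2*m+1) * (1/q) * Real.Gamma ((2 * m + 1) * (1/q)) := by
  have hq0 : (0:ℝ) < q := by linarith
  have h1 : (fun z : ℝ => Real.exp (-((|z| / b) ^ q)) * z ^ (2*m))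
      = fun z : ℝ => (fun u : ℝ => Real.exp (-((u / b) ^ q)) * u ^ (2*m)) |z| := by
    funext z
    simp only []
    rw [Even.pow_abs (even_two_mul m)]
  rw [h1, integral_comp_abs (f := fun u : ℝ => Real.exp (-((u / b) ^ q)) * u ^ (2*m))]
  have h2 : ∫ z in Ioi (0:ℝ), Real.exp (-((z / b) ^ q)) * z ^ (2*m)
      = ∫ z in Ioi (0:ℝ), z ^ ((2*m : ℕ) : ℝ) * Real.exp (-(b^(-q)) * z ^ q) := by
    refine setIntegral_congr_fun measurableSet_Ioi (fun z hz => ?_)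
    have := integrand_eq hb hq0 m hz
    rw [abs_of_pos (show (0:ℝ) < z from hz)] at this
    exact this.symm
  rw [h2, integral_rpow_mul_exp_neg_mul_rpow hq0 (lt_of_lt_of_le neg_one_lt_zero (Nat.cast_nonneg _)) (Real.rpow_pos_of_pos hb _)]
  have h3 : (b ^ (-q)) ^ (-(((2*m : ℕ) : ℝ) + 1) / q) = b ^ (2*m+1) := by
    rw [← Real.rpow_mul hb.le]
    rw [show (-q) * (-(((2*m : ℕ) : ℝ) + 1) / q) = ((2*m : ℕ) : ℝ) + 1 by field_simp]
    rw [show ((2*m : ℕ) : ℝ) + 1 = (((2*m+1 : ℕ)) : ℝ) by push_cast; ring, Real.rpow_natCast]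
  rw [h3]
  have h4 : (((2*m : ℕ) : ℝ) + 1) / q = (2 * m + 1) * (1/q) := by push_cast; ring
  rw [h4]
  ring


end GenGaussAux

open scoped ENNReal NNReal

/-- The generalized Gaussian distribution with scale `b` and shape `q`:
density `z ↦ (q/(2bΓ(1/q))) · exp(−(|z|/b)^q)` w.r.t. Lebesgue measure. -/
noncomputable def genGaussian (b q : ℝ) : Measure ℝ :=
  volume.withDensity
    (fun z => ENNReal.ofReal ((q / (2 * b * Real.Gamma (1 / q))) * Real.exp (-((|z| / b) ^ q))))

open GenGaussAux

/-- **Lemma 1** (with constant `c = 1.85`): bound on the moment generating function of a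
generalized Gaussian random variable. -/
theorem genGaussian_mgf_bound
    (b q : ℝ) (hb : 0 < b) (hq : 1 ≤ q)
    (σ : ℝ) (hσ0 : 0 ≤ σ) (hσ : σ ^ 2 = b ^ 2 * Real.Gamma (3 / q) / Real.Gamma (1 / q))
    (t : ℝ) (ht : 1.85 ^ 2 * t ^ 2 * σ ^ 2 < 1) :
    (∫ z, Real.exp (t * z) ∂(genGaussian b q)) ≤
        ∑' m : ℕ, (1.85 ^ 2 * t ^ 2 * σ ^ 2) ^ m ∧
      ∑' m : ℕ, (1.85 ^ 2 * t ^ 2 * σ ^ 2) ^ m = (1 - 1.85 ^ 2 * t ^ 2 * σ ^ 2)⁻¹ := by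
  have hq0 : (0:ℝ) < q := lt_of_lt_of_le one_pos hq
  have hx0 : (0:ℝ) < 1/q := by positivity
  have hx1 : (1:ℝ)/q ≤ 1 := by rw [div_le_one hq0]; exact hq
  have hΓx : 0 < Real.Gamma (1/q) := Real.Gamma_pos_of_pos hx0
  have hr0 : (0:ℝ) ≤ 1.85 ^ 2 * t ^ 2 * σ ^ 2 := by positivity
  have hgeo : ∑' m : ℕ, (1.85 ^ 2 * t ^ 2 * σ ^ 2) ^ m = (1 - 1.85 ^ 2 * t ^ 2 * σ ^ 2)⁻¹ :=
    tsum_geometric_of_lt_one hr0 ht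
  refine ⟨?_, hgeo⟩
  set C : ℝ := q / (2 * b * Real.Gamma (1/q)) with hCdef
  have hC : 0 < C := by
    rw [hCdef]; apply div_pos hq0; positivity
  set f : ℝ → ℝ := fun z => C * Real.exp (-((|z| / b) ^ q)) with hfdef
  have hf0 : ∀ z, 0 < f z := fun z => mul_pos hC (Real.exp_pos _)
  have hfc : Continuous f := by
    rw [hfdef]
    exact continuous_const.mul ((Real.continuous_exp).comp
      (((Real.continuous_rpow_const hq0.le).comp (continuous_abs.div_const b)).neg))
  have hσ' : σ ^ 2 = b ^ 2 * (Real.Gamma (3 * (1/q)) / Real.Gamma (1/q)) := by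
    rw [hσ, show (3:ℝ) * (1/q) = 3/q by ring]; ring
  -- representation of the integral
  have hrepr : (∫ z, Real.exp (t * z) ∂(genGaussian b q)) = ∫ z, f z * Real.exp (t * z) := by
    have hmeas : Measurable fun z : ℝ => (f z).toNNReal := hfc.measurable.real_toNNReal
    have hgg : genGaussian b q
        = volume.withDensity (fun z => ((f z).toNNReal : ℝ≥0∞)) := rfl
    rw [hgg, integral_withDensity_eq_integral_smul hmeas]
    refine integral_congr_ae (Filter.Eventually.of_forall fun z => ?_)
    show (f z).toNNReal • Real.exp (t * z) = f z * Real.exp (t * z)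
    rw [NNReal.smul_def, Real.coe_toNNReal _ (hf0 z).le, smul_eq_mul]
  rw [hrepr]
  -- moments
  have hIntF : ∀ m : ℕ, Integrable (fun z => f z * z ^ (2*m)) := by
    intro m
    have h := (integrable_moment hb hq m).const_mul C
    refine h.congr (Filter.Eventually.of_forall fun z => ?_)
    simp only [hfdef]; ring
  have hMom : ∀ m : ℕ, ∫ z, f z * z ^ (2*m)
      = b ^ (2*m) * (Real.Gamma ((2*m + 1) * (1/q)) / Real.Gamma (1/q)) := by
    intro m
    have h1 : (fun z : ℝ => f z * z ^ (2*m))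
        = fun z : ℝ => C * (Real.exp (-((|z| / b) ^ q)) * z ^ (2*m)) := by
      funext z; simp only [hfdef]; ring
    rw [h1, integral_const_mul, moment_eq hb hq m, hCdef]
    have hfne : Real.Gamma (1/q) ≠ 0 := ne_of_gt hΓx
    rw [pow_succ]
    field_simp
  -- term bound
  have hTerm : ∀ m : ℕ, ∫ z, f z * ((t*z) ^ (2*m) / (((2*m).factorial : ℕ) : ℝ))
      ≤ (1.85 ^ 2 * t ^ 2 * σ ^ 2) ^ m := by
    intro m
    have hfacne : (((2*m).factorial : ℕ) : ℝ) ≠ 0 := by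
      exact_mod_cast Nat.factorial_ne_zero _
    have h1 : (fun z : ℝ => f z * ((t*z) ^ (2*m) / (((2*m).factorial : ℕ) : ℝ)))
        = fun z : ℝ => (t ^ (2*m) / (((2*m).factorial : ℕ) : ℝ)) * (f z * z ^ (2*m)) := by
      funext z; rw [mul_pow]; ring
    rw [h1, integral_const_mul, hMom m]
    have hkey := key (1/q) hx0 hx1 m
    have hrm : (1.85 ^ 2 * t ^ 2 * σ ^ 2) ^ m
        = (t ^ (2*m) / (((2*m).factorial : ℕ) : ℝ)) * (b ^ (2*m) *
            ((1.85:ℝ) ^ (2*m) * (((2*m).factorial : ℕ) : ℝ) *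
              (Real.Gamma (3 * (1/q)) / Real.Gamma (1/q)) ^ m)) := by
      have hpow2 : (1.85:ℝ) ^ (2*m) = ((1.85:ℝ)^2) ^ m := by rw [pow_mul]
      have hpowt : t ^ (2*m) = (t^2) ^ m := by rw [pow_mul]
      have hpowb : b ^ (2*m) = (b^2) ^ m := by rw [pow_mul]
      rw [hσ', hpow2, hpowt, hpowb]
      field_simp
      ring
    rw [hrm]
    have htnn : (0:ℝ) ≤ t ^ (2*m) := Even.pow_nonneg (even_two_mul m) t
    apply mul_le_mul_of_nonneg_left _ (div_nonneg htnn (Nat.cast_nonneg _))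
    apply mul_le_mul_of_nonneg_left _ (pow_nonneg hb.le _)
    exact hkey
  -- main case split
  by_cases hint : Integrable (fun z => f z * Real.exp (t * z)) volume
  case neg =>
    rw [integral_undef hint, hgeo]
    have : 1.85 ^ 2 * t ^ 2 * σ ^ 2 ≤ 1 := le_of_lt ht
    exact inv_nonneg.mpr (by linarith)
  case pos =>
  have hint2 : Integrable (fun z => f z * Real.exp (-(t * z))) volume := by
    have h := hint.comp_neg
    refine h.congr (Filter.Eventually.of_forall fun z => ?_)
    show f (-z) * Real.exp (t * -z) = f z * Real.exp (-(t * z))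
    simp only [hfdef, abs_neg, mul_neg]
  have hrefl : ∫ z, f z * Real.exp (-(t * z)) = ∫ z, f z * Real.exp (t * z) := by
    have h := integral_neg_eq_self (fun z => f z * Real.exp (t * z)) (volume : Measure ℝ)
    refine Eq.trans ?_ h
    refine integral_congr_ae (Filter.Eventually.of_forall fun z => ?_)
    show f z * Real.exp (-(t * z)) = f (-z) * Real.exp (t * -z)
    simp only [hfdef, abs_neg, mul_neg]
  have hcosh : ∫ z, f z * Real.exp (t * z) = ∫ z, f z * Real.cosh (t * z) := by
    have heq : (fun z => f z * Real.cosh (t * z))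
        = fun z => (2⁻¹ : ℝ) * (f z * Real.exp (t * z) + f z * Real.exp (-(t * z))) := by
      funext z; rw [Real.cosh_eq]; ring
    rw [heq, integral_const_mul, integral_add hint hint2, hrefl]; ring
  rw [hcosh]
  have hnn : 0 ≤ᵐ[volume] fun z => f z * Real.cosh (t * z) :=
    Filter.Eventually.of_forall fun z => mul_nonneg (hf0 z).le (Real.cosh_pos _).le
  have hmcosh : AEStronglyMeasurable (fun z => f z * Real.cosh (t * z)) volume :=
    (hfc.mul (Real.continuous_cosh.comp (continuous_const.mul continuous_id))).aestronglyMeasurable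
  rw [integral_eq_lintegral_of_nonneg_ae hnn hmcosh]
  have hS0 : 0 ≤ ∑' m : ℕ, (1.85 ^ 2 * t ^ 2 * σ ^ 2) ^ m :=
    tsum_nonneg fun m => pow_nonneg hr0 m
  apply ENNReal.toReal_le_of_le_ofReal hS0
  have hIntTerm : ∀ m : ℕ, Integrable
      (fun z => f z * ((t*z) ^ (2*m) / (((2*m).factorial : ℕ) : ℝ))) volume := by
    intro m
    have h := (hIntF m).const_mul (t ^ (2*m) / (((2*m).factorial : ℕ) : ℝ))
    refine h.congr (Filter.Eventually.of_forall fun z => ?_)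
    simp only [mul_pow]; ring
  calc ∫⁻ z, ENNReal.ofReal (f z * Real.cosh (t * z))
      = ∫⁻ z, ∑' m : ℕ, ENNReal.ofReal
          (f z * ((t*z) ^ (2*m) / (((2*m).factorial : ℕ) : ℝ))) := by
        refine lintegral_congr fun z => ?_
        have hs : HasSum (fun m : ℕ => f z * ((t*z) ^ (2*m) / (((2*m).factorial : ℕ) : ℝ)))
            (f z * Real.cosh (t * z)) := (Real.hasSum_cosh (t * z)).mul_left (f z)
        rw [← hs.tsum_eq, ENNReal.ofReal_tsum_of_nonneg
          (fun m => mul_nonneg (hf0 z).le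
            (div_nonneg (Even.pow_nonneg (even_two_mul m) _) (Nat.cast_nonneg _))) hs.summable]
    _ = ∑' m : ℕ, ∫⁻ z, ENNReal.ofReal
          (f z * ((t*z) ^ (2*m) / (((2*m).factorial : ℕ) : ℝ))) := by
        refine lintegral_tsum fun m => ?_
        apply Measurable.aemeasurable
        apply Measurable.ennreal_ofReal
        exact (hfc.mul (((continuous_const.mul continuous_id).pow _).div_const _)).measurable
    _ ≤ ∑' m : ℕ, ENNReal.ofReal ((1.85 ^ 2 * t ^ 2 * σ ^ 2) ^ m) := by
        refine ENNReal.tsum_le_tsum fun m => ?_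
        rw [← ofReal_integral_eq_lintegral_ofReal (hIntTerm m)
          (Filter.Eventually.of_forall fun z => mul_nonneg (hf0 z).le
            (div_nonneg (Even.pow_nonneg (even_two_mul m) _) (Nat.cast_nonneg _)))]
        exact ENNReal.ofReal_le_ofReal (hTerm m)
    _ = ENNReal.ofReal (∑' m : ℕ, (1.85 ^ 2 * t ^ 2 * σ ^ 2) ^ m) :=
        (ENNReal.ofReal_tsum_of_nonneg (fun m => pow_nonneg hr0 m)
          (summable_geometric_of_lt_one hr0 ht)).symm
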